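/- Let $I \subseteq J$ be ideals of a commutative ring $R$ with $\sqrt{I} = \sqrt{J}$. If $I$ is $n$-absorbing, then $(\sqrt{J})^n \subseteq J$; in particular, the Noether exponent of $J$ is at most $\omega(I)$. -/

import Mathlib

open Ideal Finset MvPolynomial

/-- `I` is an `N`-absorbing ideal: whenever a product of `N+1` elements lies in `I`,
the product of some `N` of them (omitting one factor) lies in `I`. -/
def IsNAbsorbing {R : Type*} [CommRing R] (I : Ideal R) (N : ℕ) : Prop :=
  ∀ x : Fin (N + 1) → R, (∏ i, x i) ∈ I →
    ∃ j, (∏ i ∈ Finset.univ.erase j, x i) ∈ I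

/-- `ω(I)`: the least `N` such that `I` is `N`-absorbing. -/
noncomputable def omegaAbs {R : Type*} [CommRing R] (I : Ideal R) : ℕ :=
  sInf {N | IsNAbsorbing I N}

namespace NAbsorbAux
variable {R : Type*} [CommRing R] {m : ℕ}

def mon {m : ℕ} (x : Fin m → R) (f : Fin m → ℕ) : R := ∏ j, x j ^ f j
def deg {m : ℕ} (f : Fin m → ℕ) : ℕ := ∑ j, f j
def unit {m : ℕ} (j : Fin m) : Fin m → ℕ := fun l => if l = j then 1 else 0
def nu {m : ℕ} (c : ℕ) (f : Fin m → ℕ) : ℕ := ∑ j, f j * c ^ (m - 1 - (j : ℕ))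

variable (x : Fin m → R)
lemma mon_add (f g : Fin m → ℕ) : mon x (f + g) = mon x f * mon x g := by
  simp [mon, pow_add, Finset.prod_mul_distrib]
lemma mon_unit (j : Fin m) : mon x (unit j) = x j := by
  unfold mon unit
  rw [Finset.prod_eq_single j]
  · simp
  · intro b _ hb; simp [hb]
  · simp
lemma deg_add (f g : Fin m → ℕ) : deg (f + g) = deg f + deg g := by
  simp [deg, Finset.sum_add_distrib]
lemma deg_unit (j : Fin m) : deg (unit j) = 1 := by
  unfold deg unit
  rw [Finset.sum_eq_single j]
  · simp
  · intro b _ hb; simp [hb]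
  · simp
lemma nu_add (c : ℕ) (f g : Fin m → ℕ) : nu c (f + g) = nu c f + nu c g := by
  simp [nu, add_mul, Finset.sum_add_distrib]
lemma nu_unit (c : ℕ) (j : Fin m) : nu c (unit j) = c ^ (m - 1 - (j : ℕ)) := by
  unfold nu unit
  rw [Finset.sum_eq_single j]
  · simp
  · intro b _ hb; simp [hb]
  · simp
lemma nu_unit_lt (c : ℕ) (hc : 2 ≤ c) {j k : Fin m} (hjk : (k : ℕ) < (j : ℕ)) :
    nu c (unit j) < nu c (unit k) := by
  rw [nu_unit, nu_unit]
  apply Nat.pow_lt_pow_right (by omega)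
  have hj : (j : ℕ) < m := j.isLt
  omega
lemma greedy (I : Ideal R) (c : ℕ) (hc : 2 ≤ c) (f : Fin m → ℕ)
    (hfI : mon x f ∉ I)
    (IH : ∀ f' : Fin m → ℕ, deg f' = deg f → nu c f < nu c f' → mon x f' ∈ I) :
    ∃ A : Finset (Fin m), ∀ (j : Fin m) (h : Fin m → ℕ), f = h + unit j →
      mon x h * (∑ k ∈ A, x k) ∉ I := by
  classical
  have key : ∀ t : ℕ, ∃ A : Finset (Fin m), (∀ k ∈ A, m - t ≤ (k : ℕ)) ∧
      ∀ (j : Fin m) (h : Fin m → ℕ), m - t ≤ (j : ℕ) → f = h + unit j →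
        mon x h * (∑ k ∈ A, x k) ∉ I := by
    intro t
    induction t with
    | zero =>
      refine ⟨∅, by simp, fun j h hj _ => ?_⟩
      exfalso
      have := j.isLt
      omega
    | succ t ihA =>
      obtain ⟨A, hA1, hA2⟩ := ihA
      by_cases hmt : m - (t + 1) = m - t
      · exact ⟨A, fun k hk => hmt ▸ hA1 k hk, fun j h hj => hA2 j h (hmt ▸ hj)⟩
      · have hp1 : m - (t + 1) + 1 = m - t := by omega
        have hpm : m - (t + 1) < m := by omega
        set p := m - (t + 1) with hpdef
        set j₀ : Fin m := ⟨p, hpm⟩ with hj₀def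
        have hj₀p : (j₀ : ℕ) = p := rfl
        have hsplit : ∀ j : Fin m, p ≤ (j : ℕ) → j = j₀ ∨ m - t ≤ (j : ℕ) := by
          intro j hj
          rcases eq_or_lt_of_le hj with heq | hlt
          · left; exact Fin.ext heq.symm
          · right; omega
        by_cases hfj0 : f j₀ = 0
        · refine ⟨A, fun k hk => le_trans (by omega) (hA1 k hk), fun j h hj hfh => ?_⟩
          rcases hsplit j hj with heq | hj'
          · exfalso
            have hcf := congrFun hfh j
            simp [unit] at hcf
            rw [heq] at hcf
            omega
          · exact hA2 j h hj' hfh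
        · have hexh : ∃ h : Fin m → ℕ, f = h + unit j₀ := by
            refine ⟨fun l => f l - unit j₀ l, funext fun l => ?_⟩
            simp only [Pi.add_apply, unit]
            split <;> rename_i hl
            · subst hl; omega
            · omega
          obtain ⟨h₀, hh₀⟩ := hexh
          by_cases hT : mon x h₀ * (∑ k ∈ A, x k) ∈ I
          · -- insert j₀ into A
            have hj₀A : j₀ ∉ A := by
              intro hmem
              have := hA1 j₀ hmem
              rw [hj₀p] at this
              omega
            refine ⟨insert j₀ A, ?_, ?_⟩
            · intro k hk
              rcases Finset.mem_insert.1 hk with rfl | hk'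
              · rw [hj₀p]
              · exact le_trans (by omega) (hA1 k hk')
            · intro j h hj hfh
              rw [Finset.sum_insert hj₀A, mul_add]
              have hterm1 : mon x h * x j₀ = mon x (h + unit j₀) := by
                rw [mon_add, mon_unit]
              rcases hsplit j hj with heq | hj'
              · -- j = j₀, so h = h₀ and the first term is mon x f
                rw [heq] at hfh
                have hhh : h = h₀ := add_right_cancel (hfh.symm.trans hh₀)
                subst hhh
                rw [hterm1, ← hh₀]
                intro hmem
                exact hfI ((Ideal.add_mem_iff_left I hT).1 hmem)
              · have hterm1I : mon x (h + unit j₀) ∈ I := by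
                  apply IH
                  · rw [deg_add, deg_unit, hfh, deg_add, deg_unit]
                  · rw [hfh, nu_add, nu_add]
                    have hlt : (j₀ : ℕ) < (j : ℕ) := by rw [hj₀p]; omega
                    exact Nat.add_lt_add_left (nu_unit_lt c hc hlt) _
                rw [hterm1]
                intro hmem
                exact hA2 j h hj' hfh ((Ideal.add_mem_iff_right I hterm1I).1 hmem)
          · refine ⟨A, fun k hk => le_trans (by omega) (hA1 k hk), fun j h hj hfh => ?_⟩
            rcases hsplit j hj with heq | hj'
            · rw [heq] at hfh
              have hhh : h = h₀ := add_right_cancel (hfh.symm.trans hh₀)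
              subst hhh
              exact hT
            · exact hA2 j h hj' hfh
  obtain ⟨A, _, hA2⟩ := key m
  exact ⟨A, fun j h hfh => hA2 j h (by omega) hfh⟩



lemma exists_supp {f : Fin m → ℕ} (hf : deg f ≠ 0) : ∃ j, f j ≠ 0 := by
  by_contra hc
  push_neg at hc
  exact hf (by simp [deg, hc])

lemma exists_sub_unit {f : Fin m → ℕ} {j : Fin m} (hj : f j ≠ 0) :
    ∃ h : Fin m → ℕ, f = h + unit j := by
  refine ⟨fun l => f l - unit j l, funext fun l => ?_⟩
  simp only [Pi.add_apply, unit]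
  split <;> rename_i hl
  · subst hl; omega
  · omega

lemma mon_sum {ι : Type*} (s : Finset ι) (g : ι → (Fin m → ℕ)) :
    mon x (∑ i ∈ s, g i) = ∏ i ∈ s, mon x (g i) := by
  classical
  induction s using Finset.induction_on with
  | empty => simp [mon]
  | insert a s' h ih =>
                   rw [Finset.sum_insert h, Finset.prod_insert h, mon_add, ih]

lemma exists_partition : ∀ (n : ℕ) (f : Fin m → ℕ), 1 ≤ n → n ≤ deg f →
    ∃ g : Fin n → (Fin m → ℕ), (∀ i, deg (g i) ≠ 0) ∧ ∑ i, g i = f := by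
  intro n
  induction n with
  | zero => omega
  | succ n ih =>
    intro f _ hdeg
    have hd1 : deg f ≠ 0 := by omega
    obtain ⟨j, hj⟩ := exists_supp hd1
    rcases Nat.eq_zero_or_pos n with hn0 | hn1
    · subst hn0
      refine ⟨fun _ => f, fun i => hd1, ?_⟩
      simp
    · obtain ⟨h, hh⟩ := exists_sub_unit hj
      have hdh : deg f = deg h + 1 := by rw [hh, deg_add, deg_unit]
      obtain ⟨g', hg'1, hg'2⟩ := ih h hn1 (by omega)
      refine ⟨Fin.snoc g' (unit j), fun i => ?_, ?_⟩
      · induction i using Fin.lastCases with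
        | last => rw [Fin.snoc_last, deg_unit]; omega
        | cast i => rw [Fin.snoc_castSucc]; exact hg'1 i
      · rw [Fin.sum_univ_castSucc]
        simp only [Fin.snoc_castSucc, Fin.snoc_last]
        rw [hg'2, ← hh]

lemma row (I : Ideal R) {n : ℕ} (hI : IsNAbsorbing I n) (hn : 1 ≤ n) {d : ℕ} (hd : n ≤ d)
    (H1 : ∀ f : Fin m → ℕ, deg f = d + 1 → mon x f ∈ I) :
    ∀ f : Fin m → ℕ, deg f = d → mon x f ∈ I := by
  classical
  set c := d + 1 with hcdef
  have hc2 : 2 ≤ c := by omega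
  set B := d * c ^ m + 1 with hBdef
  have hnub : ∀ f : Fin m → ℕ, deg f = d → nu c f < B := by
    intro f hf
    have hle : nu c f ≤ d * c ^ m := by
      calc nu c f ≤ ∑ j, f j * c ^ m := by
              refine Finset.sum_le_sum fun j _ => ?_
              exact Nat.mul_le_mul_left _ (Nat.pow_le_pow_right (by omega) (by omega))
        _ = (∑ j, f j) * c ^ m := by rw [Finset.sum_mul]
        _ = d * c ^ m := by rw [show (∑ j, f j) = deg f from rfl, hf]
    omega
  suffices H : ∀ t : ℕ, ∀ f : Fin m → ℕ, deg f = d → B - nu c f ≤ t → mon x f ∈ I by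
    intro f hf
    exact H B f hf (Nat.sub_le _ _)
  intro t
  induction t using Nat.strong_induction_on with
  | _ t IHt =>
  intro f hf hBf
  have IH : ∀ f' : Fin m → ℕ, deg f' = d → nu c f < nu c f' → mon x f' ∈ I := by
    intro f' hf' hlt
    have h1 : B - nu c f' < B - nu c f := Nat.sub_lt_sub_left (hnub f hf) hlt
    exact IHt _ (lt_of_lt_of_le h1 hBf) f' hf' le_rfl
  by_contra hfI
  obtain ⟨A, hA⟩ := greedy x I c hc2 f hfI
    (fun f' h1 h2 => IH f' (by rw [h1, hf]) h2)
  obtain ⟨g, hg1, hg2⟩ := exists_partition n f hn (by rw [hf]; exact hd)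
  set sA := ∑ k ∈ A, x k with hsA
  set w : Fin (n + 1) → R := Fin.snoc (fun i => mon x (g i)) sA with hw
  have hwcast : ∀ i : Fin n, w i.castSucc = mon x (g i) := fun i => Fin.snoc_castSucc ..
  have hwlast : w (Fin.last n) = sA := Fin.snoc_last ..
  have hmonf : (∏ i : Fin n, w i.castSucc) = mon x f := by
    rw [Finset.prod_congr rfl (fun i _ => hwcast i), ← mon_sum, hg2]
  have hprodfull : (∏ i, w i) ∈ I := by
    rw [Fin.prod_univ_castSucc, hmonf, hwlast, hsA, Finset.mul_sum]
    refine Ideal.sum_mem _ fun k _ => ?_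
    rw [show mon x f * x k = mon x (f + unit k) by rw [mon_add, mon_unit]]
    exact H1 _ (by rw [deg_add, deg_unit, hf])
  obtain ⟨p, hp⟩ := hI w hprodfull
  rcases Fin.eq_castSucc_or_eq_last p with ⟨i₀, rfl⟩ | rfl
  · -- erased one of the monomial letters
    have hlast_notmem : Fin.last n ∉ (Finset.univ.erase i₀).map Fin.castSuccEmb := by
      intro hmem
      obtain ⟨a, -, ha⟩ := Finset.mem_map.1 hmem
      have := congrArg Fin.val ha
      simp only [Fin.coe_castSuccEmb, Fin.coe_castSucc, Fin.val_last] at this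
      exact absurd this (Nat.ne_of_lt a.isLt)
    have herase : (Finset.univ : Finset (Fin (n + 1))).erase i₀.castSucc =
        insert (Fin.last n) ((Finset.univ.erase i₀).map Fin.castSuccEmb) := by
      ext j
      constructor
      · intro hj
        have hj' := (Finset.mem_erase.1 hj).1
        rcases Fin.eq_castSucc_or_eq_last j with ⟨a, rfl⟩ | rfl
        · refine Finset.mem_insert_of_mem (Finset.mem_map.2 ⟨a, ?_, rfl⟩)
          refine Finset.mem_erase.2 ⟨fun h => hj' (by rw [h]), Finset.mem_univ _⟩
        · exact Finset.mem_insert_self _ _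
      · intro hj
        refine Finset.mem_erase.2 ⟨?_, Finset.mem_univ _⟩
        rcases Finset.mem_insert.1 hj with rfl | hj'
        · exact (Fin.castSucc_lt_last i₀).ne'
        · obtain ⟨a, ha, rfl⟩ := Finset.mem_map.1 hj'
          have hne : a ≠ i₀ := (Finset.mem_erase.1 ha).1
          exact fun h => hne (Fin.castSucc_injective _ h)
    have hval : (∏ i ∈ Finset.univ.erase i₀.castSucc, w i) =
        sA * mon x (∑ i ∈ Finset.univ.erase i₀, g i) := by
      rw [herase, Finset.prod_insert hlast_notmem, hwlast, Finset.prod_map, mon_sum]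
      congr 1
      exact Finset.prod_congr rfl fun i _ => by simpa using hwcast i
    rw [hval] at hp
    obtain ⟨jj, hjj⟩ := exists_supp (hg1 i₀)
    obtain ⟨gg, hgg⟩ := exists_sub_unit hjj
    have hfdecomp : f = ((∑ i ∈ Finset.univ.erase i₀, g i) + gg) + unit jj := by
      rw [← hg2, ← Finset.sum_erase_add Finset.univ g (Finset.mem_univ i₀), hgg, add_assoc]
    have hmem : mon x ((∑ i ∈ Finset.univ.erase i₀, g i) + gg) * sA ∈ I := by
      have h2 : mon x gg * (sA * mon x (∑ i ∈ Finset.univ.erase i₀, g i)) ∈ I :=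
        Ideal.mul_mem_left _ _ hp
      have h3 : mon x gg * (sA * mon x (∑ i ∈ Finset.univ.erase i₀, g i)) =
          mon x ((∑ i ∈ Finset.univ.erase i₀, g i) + gg) * sA := by
        rw [mon_add]; ring
      rwa [h3] at h2
    exact hA jj _ hfdecomp hmem
  · -- erased the sum letter
    have herase : (Finset.univ : Finset (Fin (n + 1))).erase (Fin.last n) =
        Finset.univ.map Fin.castSuccEmb := by
      rw [Fin.univ_castSuccEmb, Finset.erase_cons]
    have hval : (∏ i ∈ Finset.univ.erase (Fin.last n), w i) = mon x f := by
      rw [herase, Finset.prod_map, ← hmonf]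
      rfl
    rw [hval] at hp
    exact hfI hp


lemma prod_mem (I : Ideal R) {n : ℕ} (hI : IsNAbsorbing I n) (hn : 1 ≤ n)
    (z : Fin n → R) (hz : ∀ i, z i ∈ I.radical) : (∏ i, z i) ∈ I := by
  classical
  by_cases h1 : (1 : R) ∈ I
  · have : I = ⊤ := (Ideal.eq_top_iff_one I).2 h1
    rw [this]
    trivial
  · choose N₀ hN₀ using fun i => (hz i : ∃ k, z i ^ k ∈ I)
    set N := Finset.univ.sup N₀ + 1 with hN
    have hNle : ∀ i, N₀ i ≤ N := fun i =>
      le_trans (Finset.le_sup (Finset.mem_univ i)) (by omega)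
    have hN1 : 1 ≤ N := by omega
    have hzN : ∀ i, z i ^ N ∈ I := by
      intro i
      have heq : z i ^ N = z i ^ N₀ i * z i ^ (N - N₀ i) := by
        rw [← pow_add]
        congr 1
        have := hNle i
        omega
      rw [heq]
      exact I.mul_mem_right _ (hN₀ i)
    have base : ∀ f : Fin n → ℕ, deg f = n * N + 1 → mon z f ∈ I := by
      intro f hf
      have hex : ∃ i, N ≤ f i := by
        by_contra hc
        push_neg at hc
        have hle : deg f ≤ ∑ _i : Fin n, (N - 1) :=
          Finset.sum_le_sum fun i _ => by have := hc i; omega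
        rw [Finset.sum_const, Finset.card_univ, Fintype.card_fin, smul_eq_mul] at hle
        have h2 : n * (N - 1) + n = n * N := by
          have : N - 1 + 1 = N := by omega
          calc n * (N - 1) + n = n * (N - 1 + 1) := by ring
            _ = n * N := by rw [this]
        omega
      obtain ⟨i, hi⟩ := hex
      have hsplit : mon z f = z i ^ f i * ∏ j ∈ Finset.univ.erase i, z j ^ f j :=
        (Finset.mul_prod_erase _ _ (Finset.mem_univ i)).symm
      have hpow : z i ^ f i ∈ I := by
        have heq : z i ^ f i = z i ^ N * z i ^ (f i - N) := by
          rw [← pow_add]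
          congr 1
          omega
        rw [heq]
        exact I.mul_mem_right _ (hzN i)
      rw [hsplit]
      exact I.mul_mem_right _ hpow
    have desc : ∀ k d, n ≤ d → d + k = n * N + 1 →
        ∀ f : Fin n → ℕ, deg f = d → mon z f ∈ I := by
      intro k
      induction k with
      | zero =>
        intro d hd he f hf
        exact base f (by omega)
      | succ k ih =>
        intro d hd he f hf
        exact row z I hI hn hd (fun f' hf' => ih (d + 1) (by omega) (by omega) f' hf') f hf
    have hnN : n ≤ n * N + 1 := by
      have := Nat.mul_le_mul_left n hN1
      omega
    have hfin := desc (n * N + 1 - n) n le_rfl (by omega) (fun _ => 1)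
      (by simp [deg])
    simpa [mon] using hfin

lemma radical_pow_le (I : Ideal R) {n : ℕ} (hI : IsNAbsorbing I n) (hn : 1 ≤ n) :
    I.radical ^ n ≤ I := by
  classical
  have hspan : ∀ k : ℕ, I.radical ^ k ≤
      Ideal.span {r : R | ∃ z : Fin k → R, (∀ i, z i ∈ I.radical) ∧ r = ∏ i, z i} := by
    intro k
    induction k with
    | zero =>
      have h1mem : (1 : R) ∈
          {r : R | ∃ z : Fin 0 → R, (∀ i, z i ∈ I.radical) ∧ r = ∏ i, z i} :=
        ⟨fun i => i.elim0, fun i => i.elim0, by simp⟩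
      rw [pow_zero, Ideal.one_eq_top]
      exact ((Ideal.eq_top_iff_one _).2 (Ideal.subset_span h1mem)).ge
    | succ k ih =>
      rw [pow_succ]
      refine Submodule.mul_le.2 fun a ha b hb => ?_
      have ha' := ih ha
      clear ha
      induction ha' using Submodule.span_induction with
      | mem r hr =>
        obtain ⟨z, hz, rfl⟩ := hr
        refine Ideal.subset_span ⟨Fin.snoc z b, fun i => ?_, ?_⟩
        · induction i using Fin.lastCases with
          | last => rw [Fin.snoc_last]; exact hb
          | cast i => rw [Fin.snoc_castSucc]; exact hz i
        · rw [Fin.prod_univ_castSucc]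
          simp only [Fin.snoc_castSucc, Fin.snoc_last]
      | zero => rw [zero_mul]; exact zero_mem _
      | add u v hu hv ihu ihv => rw [add_mul]; exact add_mem ihu ihv
      | smul c u hu ihu => rw [smul_mul_assoc]; exact Submodule.smul_mem _ _ ihu
  refine le_trans (hspan n) (Ideal.span_le.2 ?_)
  rintro r ⟨z, hz, rfl⟩
  exact prod_mem I hI hn z hz

end NAbsorbAux

theorem radical_pow_le_of_nAbsorbing_le {R : Type*} [CommRing R] (I J : Ideal R)
    (hle : I ≤ J) (hrad : I.radical = J.radical) (n : ℕ) (hn : 1 ≤ n)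
    (h : IsNAbsorbing I n) :
    J.radical ^ n ≤ J := by
  have h2 : I.radical ^ n ≤ I := NAbsorbAux.radical_pow_le I h hn
  rw [← hrad]
  exact le_trans h2 hle
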